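/- (Discrete second-difference estimate for the nonlocal velocities) Let $\dot W_i^p = -\sum_h \sigma_h^N \sum_{j=0}^N P_{uh}(W_i, H_j)(W_i - H_j)$ with each $P_{uh}$ bounded, Lipschitz in the first variable with Lipschitz derivative $\partial_1 P_{uh}$, and all $H_j \in [-1,1]$, $\sum_h \sigma_h^N (N+1) \le C_0$. Then for any $W_i < W_{i+1} < W_{i+2}$ in $[-1,1]$: $\left|\frac{\dot W_{i+2}^p - \dot W_{i+1}^p}{W_{i+2} - W_{i+1}} - \frac{\dot W_{i+1}^p - \dot W_i^p}{W_{i+1} - W_i}\right| \le C_0 (W_{i+2} - W_i) \max_h \big(2\,\mathrm{Lip}[\partial_1 P_{uh}] + \|\partial_1 P_{uh}\|_\infty + \mathrm{Lip}[P_{uh}]\big)$. -/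

import Mathlib

open Finset

/-- discrete second-difference estimate for the nonlocal velocities. -/
theorem nonlocal_second_difference {ι : Type*} [Fintype ι] [Nonempty ι]
    (N : ℕ) (C0 : ℝ)
    (σhN LP BdP LdP : ι → ℝ) (hσhN : ∀ h, 0 ≤ σhN h)
    (hC0 : (∑ h, σhN h * (N + 1)) ≤ C0)
    (H : ι → ℕ → ℝ) (hH : ∀ h j, H h j ∈ Set.Icc (-1 : ℝ) 1)
    (P dP : ι → ℝ → ℝ → ℝ)
    (hPlip : ∀ h w₁ w₂ v, |P h w₁ v - P h w₂ v| ≤ LP h * |w₁ - w₂|)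
    (hdP : ∀ h v w, HasDerivAt (fun x => P h x v) (dP h w v) w)
    (hdPbd : ∀ h w v, |dP h w v| ≤ BdP h)
    (hdPlip : ∀ h w₁ w₂ v, |dP h w₁ v - dP h w₂ v| ≤ LdP h * |w₁ - w₂|)
    (V : ℝ → ℝ)
    (hV : ∀ x, V x = -∑ h, σhN h *
        ∑ j ∈ Finset.range (N + 1), P h x (H h j) * (x - H h j))
    (Wi Wip Wipp : ℝ)
    (hWi : Wi ∈ Set.Icc (-1 : ℝ) 1) (hWipp : Wipp ∈ Set.Icc (-1 : ℝ) 1)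
    (h1 : Wi < Wip) (h2 : Wip < Wipp) :
    |(V Wipp - V Wip) / (Wipp - Wip) - (V Wip - V Wi) / (Wip - Wi)|
      ≤ C0 * (Wipp - Wi) *
          (Finset.univ.sup' Finset.univ_nonempty
            fun h => 2 * LdP h + BdP h + LP h) := by
  -- nonnegativity of constants
  have hLPnn : ∀ h, 0 ≤ LP h := by
    intro h
    have := hPlip h 0 1 0
    have h0 : (0:ℝ) ≤ |P h 0 0 - P h 1 0| := abs_nonneg _
    simp at this
    linarith
  have hLdPnn : ∀ h, 0 ≤ LdP h := by
    intro h
    have := hdPlip h 0 1 0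
    have h0 : (0:ℝ) ≤ |dP h 0 0 - dP h 1 0| := abs_nonneg _
    simp at this
    linarith
  have hBdPnn : ∀ h, 0 ≤ BdP h := fun h => le_trans (abs_nonneg _) (hdPbd h 0 0)
  set K : ι → ℝ := fun h => 2 * LdP h + BdP h + LP h with hK
  set M : ℝ := Finset.univ.sup' Finset.univ_nonempty K with hM
  have hKM : ∀ h, K h ≤ M := fun h => Finset.le_sup' K (Finset.mem_univ h)
  have hKnn : ∀ h, 0 ≤ K h := fun h => by
    have := hLPnn h; have := hLdPnn h; have := hBdPnn h
    simp only [hK]; linarith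
  have hMnn : 0 ≤ M := le_trans (hKnn (Classical.arbitrary ι)) (hKM _)
  -- the derivative of each summand
  set g : ι → ℕ → ℝ → ℝ := fun h j x => dP h x (H h j) * (x - H h j) + P h x (H h j)
    with hg
  have hgderiv : ∀ h j x, HasDerivAt (fun y => P h y (H h j) * (y - H h j)) (g h j x) x := by
    intro h j x
    have := (hdP h (H h j) x).mul ((hasDerivAt_id x).sub_const (H h j))
    exact this.congr_deriv (by simp only [hg, id]; ring)
  -- Lipschitz bound for g on [-1,1]
  have hgLip : ∀ h j, ∀ x ∈ Set.Icc (-1:ℝ) 1, ∀ y ∈ Set.Icc (-1:ℝ) 1,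
      |g h j x - g h j y| ≤ K h * |x - y| := by
    intro h j x hx y hy
    have hvd : |x - H h j| ≤ 2 := by
      have := hH h j
      rw [abs_le]
      constructor <;> [skip; skip] <;>
        · obtain ⟨a1, a2⟩ := hx; obtain ⟨b1, b2⟩ := this; linarith
    have e : g h j x - g h j y
        = (dP h x (H h j) - dP h y (H h j)) * (x - H h j)
          + dP h y (H h j) * (x - y) + (P h x (H h j) - P h y (H h j)) := by
      simp only [hg]; ring
    have b1 := hdPlip h x y (H h j)
    have b2 := hdPbd h y (H h j)
    have b3 := hPlip h x y (H h j)
    have t1 : |dP h x (H h j) - dP h y (H h j)| * |x - H h j| ≤ (LdP h * |x - y|) * 2 :=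
      mul_le_mul b1 hvd (abs_nonneg _) (mul_nonneg (hLdPnn h) (abs_nonneg _))
    have t2 : |dP h y (H h j)| * |x - y| ≤ BdP h * |x - y| :=
      mul_le_mul_of_nonneg_right b2 (abs_nonneg _)
    calc |g h j x - g h j y|
        ≤ |(dP h x (H h j) - dP h y (H h j)) * (x - H h j)|
          + |dP h y (H h j) * (x - y)| + |P h x (H h j) - P h y (H h j)| := by
          rw [e]; exact le_trans (abs_add_le _ _) (by gcongr; exact abs_add_le _ _)
      _ = |dP h x (H h j) - dP h y (H h j)| * |x - H h j|
          + |dP h y (H h j)| * |x - y| + |P h x (H h j) - P h y (H h j)| := by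
          rw [abs_mul, abs_mul]
      _ ≤ (LdP h * |x - y|) * 2 + BdP h * |x - y| + LP h * |x - y| := by
          exact add_le_add (add_le_add t1 t2) b3
      _ = K h * |x - y| := by simp only [hK]; ring
  -- mean value theorem applied to each summand on an interval
  have hmvt : ∀ h j (p q : ℝ), -1 ≤ p → q ≤ 1 → p < q →
      ∃ ξ ∈ Set.Ioo p q,
        g h j ξ = (P h q (H h j) * (q - H h j) - P h p (H h j) * (p - H h j)) / (q - p) := by
    intro h j p q _ _ hpq
    have hcont : ContinuousOn (fun y => P h y (H h j) * (y - H h j)) (Set.Icc p q) :=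
      fun x _ => ((hgderiv h j x).continuousAt).continuousWithinAt
    obtain ⟨ξ, hξ, hξeq⟩ := exists_hasDerivAt_eq_slope
      (fun y => P h y (H h j) * (y - H h j)) (g h j ·) hpq hcont
      (fun x _ => hgderiv h j x)
    exact ⟨ξ, hξ, hξeq⟩
  -- bound on the second difference of each summand
  have hkey : ∀ h j,
      |(P h Wipp (H h j) * (Wipp - H h j) - P h Wip (H h j) * (Wip - H h j)) / (Wipp - Wip)
        - (P h Wip (H h j) * (Wip - H h j) - P h Wi (H h j) * (Wi - H h j)) / (Wip - Wi)|
      ≤ K h * (Wipp - Wi) := by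
    intro h j
    obtain ⟨ξ₂, hξ₂, he₂⟩ := hmvt h j Wip Wipp (by linarith [hWi.1]) hWipp.2 h2
    obtain ⟨ξ₁, hξ₁, he₁⟩ := hmvt h j Wi Wip hWi.1 (by linarith [hWipp.2]) h1
    rw [← he₂, ← he₁]
    have hξ₂m : ξ₂ ∈ Set.Icc (-1:ℝ) 1 :=
      ⟨by linarith [hξ₂.1, hWi.1], by linarith [hξ₂.2, hWipp.2]⟩
    have hξ₁m : ξ₁ ∈ Set.Icc (-1:ℝ) 1 :=
      ⟨by linarith [hξ₁.1, hWi.1], by linarith [hξ₁.2, hWipp.2]⟩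
    have hlip := hgLip h j ξ₂ hξ₂m ξ₁ hξ₁m
    have habs : |ξ₂ - ξ₁| ≤ Wipp - Wi := by
      rw [abs_le]
      constructor <;> [skip; skip] <;>
        · have := hξ₂.1; have := hξ₂.2; have := hξ₁.1; have := hξ₁.2; linarith
    calc |g h j ξ₂ - g h j ξ₁| ≤ K h * |ξ₂ - ξ₁| := hlip
      _ ≤ K h * (Wipp - Wi) := mul_le_mul_of_nonneg_left habs (hKnn h)
  -- rewrite the difference quotients of V
  have hne2 : Wipp - Wip ≠ 0 := sub_ne_zero.mpr (ne_of_gt h2)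
  have hne1 : Wip - Wi ≠ 0 := sub_ne_zero.mpr (ne_of_gt h1)
  have hquot : ∀ p q : ℝ, q - p ≠ 0 → (V q - V p) / (q - p)
      = -∑ h, σhN h * ∑ j ∈ Finset.range (N+1),
          (P h q (H h j) * (q - H h j) - P h p (H h j) * (p - H h j)) / (q - p) := by
    intro p q hne
    trans (-∑ h, σhN h * ((∑ j ∈ Finset.range (N+1), P h q (H h j) * (q - H h j)
        - ∑ j ∈ Finset.range (N+1), P h p (H h j) * (p - H h j)) / (q - p)))
    · rw [hV, hV, div_eq_iff hne]
      simp only [neg_mul, Finset.sum_mul]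
      simp only [mul_assoc]
      simp only [div_mul_cancel₀ _ hne]
      simp only [mul_sub, Finset.sum_sub_distrib]
      ring
    · refine congrArg Neg.neg (Finset.sum_congr rfl fun h _ => ?_)
      rw [← Finset.sum_div, Finset.sum_sub_distrib]
  have hexpand : (V Wipp - V Wip) / (Wipp - Wip) - (V Wip - V Wi) / (Wip - Wi)
      = ∑ h, σhN h * ∑ j ∈ Finset.range (N+1),
          ((P h Wip (H h j) * (Wip - H h j) - P h Wi (H h j) * (Wi - H h j)) / (Wip - Wi)
          - (P h Wipp (H h j) * (Wipp - H h j) - P h Wip (H h j) * (Wip - H h j)) / (Wipp - Wip)) := by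
    rw [hquot Wip Wipp hne2, hquot Wi Wip hne1]
    simp only [Finset.sum_sub_distrib, mul_sub]
    ring
  rw [hexpand]
  have hWnn : (0:ℝ) ≤ Wipp - Wi := by linarith
  have hterm : ∀ h, |σhN h * ∑ j ∈ Finset.range (N+1),
      ((P h Wip (H h j) * (Wip - H h j) - P h Wi (H h j) * (Wi - H h j)) / (Wip - Wi)
      - (P h Wipp (H h j) * (Wipp - H h j) - P h Wip (H h j) * (Wip - H h j)) / (Wipp - Wip))|
      ≤ σhN h * ((N + 1) * (M * (Wipp - Wi))) := by
    intro h
    rw [abs_mul, abs_of_nonneg (hσhN h)]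
    refine mul_le_mul_of_nonneg_left ?_ (hσhN h)
    calc |∑ j ∈ Finset.range (N+1),
        ((P h Wip (H h j) * (Wip - H h j) - P h Wi (H h j) * (Wi - H h j)) / (Wip - Wi)
        - (P h Wipp (H h j) * (Wipp - H h j) - P h Wip (H h j) * (Wip - H h j)) / (Wipp - Wip))|
        ≤ ∑ j ∈ Finset.range (N+1),
          |(P h Wip (H h j) * (Wip - H h j) - P h Wi (H h j) * (Wi - H h j)) / (Wip - Wi)
          - (P h Wipp (H h j) * (Wipp - H h j) - P h Wip (H h j) * (Wip - H h j)) / (Wipp - Wip)| :=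
          Finset.abs_sum_le_sum_abs _ _
      _ ≤ ∑ j ∈ Finset.range (N+1), M * (Wipp - Wi) := by
          refine Finset.sum_le_sum fun j _ => ?_
          rw [abs_sub_comm]
          exact le_trans (hkey h j) (mul_le_mul_of_nonneg_right (hKM h) hWnn)
      _ = (N + 1) * (M * (Wipp - Wi)) := by
          rw [Finset.sum_const, Finset.card_range, nsmul_eq_mul]
          push_cast
          ring
  calc |∑ h, σhN h * ∑ j ∈ Finset.range (N+1),
      ((P h Wip (H h j) * (Wip - H h j) - P h Wi (H h j) * (Wi - H h j)) / (Wip - Wi)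
      - (P h Wipp (H h j) * (Wipp - H h j) - P h Wip (H h j) * (Wip - H h j)) / (Wipp - Wip))|
      ≤ ∑ h, |σhN h * ∑ j ∈ Finset.range (N+1),
        ((P h Wip (H h j) * (Wip - H h j) - P h Wi (H h j) * (Wi - H h j)) / (Wip - Wi)
        - (P h Wipp (H h j) * (Wipp - H h j) - P h Wip (H h j) * (Wip - H h j)) / (Wipp - Wip))| :=
        Finset.abs_sum_le_sum_abs _ _
    _ ≤ ∑ h, σhN h * ((N + 1) * (M * (Wipp - Wi))) :=
        Finset.sum_le_sum fun h _ => hterm h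
    _ = (∑ h, σhN h * (N + 1)) * (M * (Wipp - Wi)) := by
        rw [Finset.sum_mul]
        exact Finset.sum_congr rfl fun h _ => by ring
    _ ≤ C0 * (M * (Wipp - Wi)) :=
        mul_le_mul_of_nonneg_right hC0 (mul_nonneg hMnn hWnn)
    _ = C0 * (Wipp - Wi) * M := by ring
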